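/- (Proposition 3.10, density of bad parameters for small b) Let d ≥ 2 be an integer and let b ∈ ℝ with 0 < b ≤ (d−1)/(d+1). Then the set of parameters ξ ∈ ∂𝔻 for which the orbit of ξ under f_{ξ,b} takes the value −1 (i.e. there exists n ≥ 0 with f_{ξ,b}^{∘n}(ξ) = −1) is dense in the unit circle ∂𝔻. -/

import Mathlib

open Complex Real


/-- The rational map `f_{ξ,b}(R) = ξ·((R+b)/(bR+1))^d` associated to the Ising model. -/
noncomputable def fIsing (d : ℕ) (ξ b R : ℂ) : ℂ := ξ * ((R + b) / (b * R + 1)) ^ d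

/-- The closed circular arc `{e^{it} : t between 0 and s}` on the unit circle; its
boundary points are `1` and `e^{is}`. -/
def circArc (s : ℝ) : Set ℂ := (fun t : ℝ => Complex.exp (t * Complex.I)) '' Set.uIcc 0 s

noncomputable def hLift (b α : ℝ) : ℝ :=
  α - 2 * Real.arctan (b * Real.sin α / (1 + b * Real.cos α))

lemma denomPos {b : ℝ} (hb : 0 < b) (hb1 : b < 1) (α : ℝ) : 0 < 1 + b * Real.cos α := by
  nlinarith [Real.neg_one_le_cos α]

lemma quadPos {b : ℝ} (hb : 0 < b) (hb1 : b < 1) (α : ℝ) :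
    0 < 1 + 2 * b * Real.cos α + b ^ 2 := by
  nlinarith [Real.neg_one_le_cos α]

lemma hasDerivAt_hLift {b : ℝ} (hb : 0 < b) (hb1 : b < 1) (α : ℝ) :
    HasDerivAt (hLift b) ((1 - b ^ 2) / (1 + 2 * b * Real.cos α + b ^ 2)) α := by
  have hD := denomPos hb hb1 α
  have hQ := quadPos hb hb1 α
  have hnum : HasDerivAt (fun α => b * Real.sin α) (b * Real.cos α) α :=
    (Real.hasDerivAt_sin α).const_mul b
  have hden : HasDerivAt (fun α => 1 + b * Real.cos α) (b * (-Real.sin α)) α := by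
    simpa using ((Real.hasDerivAt_cos α).const_mul b).const_add 1
  have hu := hnum.div hden hD.ne'
  have ha := hu.arctan
  have h := (hasDerivAt_id α).sub (ha.const_mul 2)
  refine h.congr_deriv ?_
  have hs := Real.sin_sq_add_cos_sq α
  set s := Real.sin α
  set c := Real.cos α
  have key : 1 + (b * s / (1 + b * c)) ^ 2 = (1 + 2 * b * c + b ^ 2) / (1 + b * c) ^ 2 := by
    field_simp
    linear_combination b ^ 2 * hs
  have key2 : b * c * (1 + b * c) - b * s * (b * -s) = b * c + b ^ 2 := by
    linear_combination b ^ 2 * hs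
  simp only [Pi.div_apply]
  rw [key, key2]
  field_simp
  ring

lemma exp_neg_two_arctan {w : ℂ} (hw : 0 < w.re) :
    Complex.exp ((-(2 * Real.arctan (w.im / w.re)) : ℝ) * I) = (starRingEnd ℂ) w / w := by
  have hw0 : w ≠ 0 := by
    intro h; rw [h] at hw; simp at hw
  set u := w.im / w.re with hu
  have h1 : (0:ℝ) < 1 + u ^ 2 := by positivity
  have hcos : Real.cos (-(2 * Real.arctan u)) = (1 - u ^ 2) / (1 + u ^ 2) := by
    rw [Real.cos_neg, Real.cos_two_mul, Real.cos_arctan, div_pow, one_pow,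
      Real.sq_sqrt h1.le]
    field_simp
    ring
  have hsin : Real.sin (-(2 * Real.arctan u)) = -(2 * u) / (1 + u ^ 2) := by
    rw [Real.sin_neg, Real.sin_two_mul, Real.sin_arctan, Real.cos_arctan]
    have hs : Real.sqrt (1 + u ^ 2) ≠ 0 := by positivity
    field_simp
    rw [Real.sq_sqrt h1.le]
  rw [eq_div_iff hw0, Complex.exp_mul_I, ← Complex.ofReal_cos, ← Complex.ofReal_sin]
  have hre := hw.ne'
  have hwim : w.im = u * w.re := by rw [hu]; field_simp
  apply Complex.ext
  · simp only [add_mul, Complex.add_re, Complex.mul_re, Complex.ofReal_re, Complex.ofReal_im,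
      Complex.I_re, Complex.I_im, Complex.mul_im, Complex.conj_re, Complex.conj_im]
    rw [hcos, hsin]
    field_simp [hu]
    linear_combination (2 * u) * hwim
  · simp only [add_mul, Complex.add_im, Complex.mul_re, Complex.ofReal_re, Complex.ofReal_im,
      Complex.I_re, Complex.I_im, Complex.mul_im, Complex.conj_re, Complex.conj_im]
    rw [hcos, hsin]
    field_simp [hu]
    linear_combination 2 * hwim

lemma exp_hLift {b : ℝ} (hb : 0 < b) (hb1 : b < 1) (α : ℝ) :
    Complex.exp ((hLift b α : ℝ) * I) =
      (Complex.exp ((α : ℂ) * I) + (b : ℂ)) / ((b : ℂ) * Complex.exp ((α : ℂ) * I) + 1) := by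
  have hD := denomPos hb hb1 α
  set e := Complex.exp ((α : ℂ) * I) with he
  set w : ℂ := 1 + (b : ℂ) * e with hw
  have hwre : w.re = 1 + b * Real.cos α := by
    simp [hw, he, Complex.exp_ofReal_mul_I_re, Complex.exp_ofReal_mul_I_im, Complex.mul_re]
  have hwim : w.im = b * Real.sin α := by
    simp [hw, he, Complex.exp_ofReal_mul_I_re, Complex.exp_ofReal_mul_I_im, Complex.mul_im]
  have hwpos : 0 < w.re := by rw [hwre]; exact hD
  have key := exp_neg_two_arctan hwpos
  rw [hwre, hwim] at key
  have h1 : ((hLift b α : ℝ) : ℂ) * I =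
      (α : ℂ) * I +
        ((-(2 * Real.arctan (b * Real.sin α / (1 + b * Real.cos α))) : ℝ) : ℂ) * I := by
    rw [hLift]; push_cast; ring
  rw [h1, Complex.exp_add, ← he, key]
  have hcw : (starRingEnd ℂ) w = 1 + (b : ℂ) * Complex.exp (-((α : ℂ) * I)) := by
    rw [hw, map_add, map_mul, map_one, Complex.conj_ofReal, he, ← Complex.exp_conj]
    congr 2
    simp [Complex.conj_ofReal]
  have hee : e * Complex.exp (-((α : ℂ) * I)) = 1 := by
    rw [he, ← Complex.exp_add]; simp
  have hec : e * (starRingEnd ℂ) w = e + b := by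
    rw [hcw, mul_add, mul_one,
      show e * ((b : ℂ) * Complex.exp (-((α : ℂ) * I))) =
        (b : ℂ) * (e * Complex.exp (-((α : ℂ) * I))) from by ring, hee, mul_one]
  rw [← mul_div_assoc, hec]
  congr 1
  rw [hw]; ring

noncomputable def GLift (d : ℕ) (b : ℝ) : ℕ → ℝ → ℝ
  | 0 => fun θ => θ
  | n + 1 => fun θ => θ + d * hLift b (GLift d b n θ)

lemma GLift_deriv {d : ℕ} {b : ℝ} (hb : 0 < b) (hb1 : b < 1)
    (hdb : (1 : ℝ) + b ≤ d * (1 - b)) (n : ℕ) (θ : ℝ) :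
    ∃ v : ℝ, HasDerivAt (GLift d b n) v θ ∧ ((n : ℝ) + 1) ≤ v := by
  induction n generalizing θ with
  | zero => exact ⟨1, hasDerivAt_id θ, by norm_num⟩
  | succ n ih =>
    obtain ⟨v, hv, hvge⟩ := ih θ
    set α := GLift d b n θ
    have hh := hasDerivAt_hLift hb hb1 α
    set w := (1 - b ^ 2) / (1 + 2 * b * Real.cos α + b ^ 2) with hwdef
    have hQ := quadPos hb hb1 α
    have hwlb : (1 - b) / (1 + b) ≤ w := by
      rw [hwdef, div_le_div_iff₀ (by linarith) hQ]
      nlinarith [Real.cos_le_one α,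
        mul_nonneg (mul_nonneg (sub_nonneg.2 hb1.le) hb.le)
          (sub_nonneg.2 (Real.cos_le_one α))]
    have hdw : (1 : ℝ) ≤ d * w := by
      have h1b : (0:ℝ) < 1 + b := by linarith
      have : (1 : ℝ) ≤ d * ((1 - b) / (1 + b)) := by
        rw [show (d : ℝ) * ((1 - b) / (1 + b)) = (d * (1 - b)) / (1 + b) from by ring,
          le_div_iff₀ h1b, one_mul]
        exact hdb
      calc (1:ℝ) ≤ d * ((1 - b) / (1 + b)) := this
        _ ≤ d * w := by
            apply mul_le_mul_of_nonneg_left hwlb (by positivity)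
    have hG : HasDerivAt (GLift d b (n + 1)) (1 + d * (w * v)) θ := by
      have := ((hh.comp θ hv).const_mul (d : ℝ))
      exact (hasDerivAt_id θ).add this
    refine ⟨1 + d * (w * v), hG, ?_⟩
    have hv0 : (0:ℝ) ≤ v := by
      have : (0:ℝ) ≤ (n:ℝ) + 1 := by positivity
      linarith
    have : v ≤ (d * w) * v := le_mul_of_one_le_left hv0 hdw
    push_cast
    nlinarith

lemma GLift_semiconj {d : ℕ} {b : ℝ} (hb : 0 < b) (hb1 : b < 1) (n : ℕ) (θ : ℝ) :
    (fIsing d (Complex.exp ((θ : ℂ) * I)) (b : ℂ))^[n] (Complex.exp ((θ : ℂ) * I)) =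
      Complex.exp ((GLift d b n θ : ℝ) * I) := by
  induction n with
  | zero => simp [GLift]
  | succ n ih =>
    rw [Function.iterate_succ_apply', ih]
    show Complex.exp ((θ:ℂ) * I) * ((Complex.exp ((GLift d b n θ : ℝ) * I) + (b:ℂ)) /
      ((b:ℂ) * Complex.exp ((GLift d b n θ : ℝ) * I) + 1)) ^ d = _
    rw [← exp_hLift hb hb1, ← Complex.exp_nat_mul, ← Complex.exp_add]
    congr 1
    rw [GLift]
    push_cast
    ring

/-- Proposition 3.10: for `0 < b ≤ (d-1)/(d+1)` the parameters `ξ` on the unit circle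
whose orbit under `f_{ξ,b}` takes the value `-1` are dense in the unit circle. -/
theorem fIsing_bad_parameters_dense_small_b (d : ℕ) (hd : 2 ≤ d) (b : ℝ)
    (hb₁ : 0 < b) (hb₂ : b ≤ ((d : ℝ) - 1) / ((d : ℝ) + 1)) :
    Metric.sphere (0 : ℂ) 1 ⊆
      closure {ξ : ℂ | ‖ξ‖ = 1 ∧
        ∃ n : ℕ, (fIsing d ξ (b : ℂ))^[n] ξ = -1} := by
  have hπ := Real.pi_pos
  have hd1 : (0:ℝ) < (d:ℝ) + 1 := by positivity
  have hb1 : b < 1 := by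
    apply lt_of_le_of_lt hb₂
    rw [div_lt_one hd1]; linarith
  have hdb : (1:ℝ) + b ≤ d * (1 - b) := by
    have h := (le_div_iff₀ hd1).mp hb₂
    nlinarith
  intro ξ₀ hξ₀
  have habs : ‖ξ₀‖ = 1 := by
    simpa [Complex.dist_eq] using hξ₀
  rw [Metric.mem_closure_iff]
  intro ε hε
  set θ₀ := Complex.arg ξ₀ with hθ₀
  have hξ₀eq : ξ₀ = Complex.exp ((θ₀ : ℂ) * I) := by
    conv_lhs => rw [← Complex.norm_mul_exp_arg_mul_I ξ₀]
    rw [habs]; simp [hθ₀]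
  set δ := min (ε/3) 1 with hδdef
  have hδpos : 0 < δ := lt_min (by linarith) one_pos
  have hδ1 : δ ≤ 1 := min_le_right _ _
  have hδε : δ ≤ ε/3 := min_le_left _ _
  set n := ⌈2*π/δ⌉₊ with hn
  have h2π : 2*π ≤ ((n:ℝ)+1)*δ := by
    have h := Nat.le_ceil (2*π/δ)
    rw [div_le_iff₀ hδpos] at h
    nlinarith
  have hder := GLift_deriv hb₁ hb1 hdb n
  have hdiff : Differentiable ℝ (GLift d b n) := fun x =>
    ((hder x).choose_spec.1).differentiableAt
  have hbound : ∀ x, ((n:ℝ)+1) ≤ deriv (GLift d b n) x := fun x => by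
    obtain ⟨v, hv, hge⟩ := hder x
    rw [hv.deriv]; exact hge
  have hmvt := mul_sub_le_image_sub_of_le_deriv hdiff hbound (show θ₀ ≤ θ₀ + δ by linarith)
  set A := GLift d b n θ₀ with hA
  have hAB : A + 2*π ≤ GLift d b n (θ₀ + δ) := by
    have h : ((n:ℝ)+1) * δ ≤ GLift d b n (θ₀ + δ) - A := by
      simpa using hmvt
    linarith
  set k := ⌈(A - π)/(2*π)⌉ with hk
  have hk1 : A ≤ π + 2*π*k := by
    have h := Int.le_ceil ((A - π)/(2*π))
    rw [div_le_iff₀ (by positivity)] at h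
    linarith
  have hk2 : π + 2*π*k ≤ A + 2*π := by
    have h := Int.ceil_lt_add_one ((A - π)/(2*π))
    have h2 : ((A - π)/(2*π)) * (2*π) = A - π := div_mul_cancel₀ _ (by positivity)
    nlinarith
  have hIVT := intermediate_value_Icc (by linarith : θ₀ ≤ θ₀ + δ)
    (hdiff.continuous.continuousOn)
  have hmem : (π + 2*π*(k:ℝ)) ∈ Set.Icc (GLift d b n θ₀) (GLift d b n (θ₀ + δ)) :=
    ⟨hk1, by linarith⟩
  obtain ⟨θ, hθmem, hθeq⟩ := hIVT hmem
  refine ⟨Complex.exp ((θ : ℂ) * I), ⟨?_, n, ?_⟩, ?_⟩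
  · rw [Complex.norm_exp]; simp
  · rw [GLift_semiconj hb₁ hb1 n θ, hθeq]
    have hcast : ((π + 2*π*(k:ℝ) : ℝ) : ℂ) * I = (π : ℂ) * I + (k : ℂ) * (2*(π:ℂ)*I) := by
      push_cast; ring
    rw [hcast, Complex.exp_add, Complex.exp_int_mul_two_pi_mul_I, Complex.exp_pi_mul_I, mul_one]
  · rw [hξ₀eq, Complex.dist_eq]
    have hfac : Complex.exp ((θ₀ : ℂ) * I) - Complex.exp ((θ : ℂ) * I) =
        Complex.exp ((θ : ℂ) * I) * (Complex.exp (((θ₀ - θ : ℝ) : ℂ) * I) - 1) := by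
      rw [mul_sub, mul_one, ← Complex.exp_add]
      push_cast
      ring_nf
    rw [hfac, norm_mul, Complex.norm_exp]
    have hre : ((θ : ℂ) * I).re = 0 := by simp
    rw [hre, Real.exp_zero, one_mul]
    have habsz : ‖((θ₀ - θ : ℝ) : ℂ) * I‖ = |θ₀ - θ| := by
      rw [norm_mul, Complex.norm_I, Complex.norm_real, Real.norm_eq_abs, mul_one]
    have hθd : |θ₀ - θ| ≤ δ := by
      obtain ⟨h1, h2⟩ := hθmem
      rw [abs_le]; constructor <;> linarith
    have hle := Complex.norm_exp_sub_one_le (x := ((θ₀ - θ : ℝ) : ℂ) * I)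
      (by rw [habsz]; linarith)
    rw [habsz] at hle
    calc ‖Complex.exp (((θ₀ - θ : ℝ) : ℂ) * I) - 1‖ ≤ 2 * |θ₀ - θ| := hle
      _ ≤ 2 * δ := by linarith
      _ < ε := by linarith
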